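/- If F = (X; f₁,…,f_N) is a point-fibred IFS on a compact Hausdorff space X, then F possesses a unique attractor A ∈ K(X); namely, the unique fixed point A of the map B ↦ ⋃_i f_i(B) on K(X) satisfies: there exists an open set U ⊆ X with A ⊆ U such that F^k(B) → A in the Vietoris topology on K(X) for every B ∈ K(U), and no other element of K(X) has these properties. -/

import Mathlib

open Set Topology Filter

/-- `seqComp f σ k` is the composition `f_{σ|k} = f_{σ₁} ∘ f_{σ₂} ∘ ⋯ ∘ f_{σ_k}`
(with the sequence `σ` indexed from `0`). -/
def seqComp {X : Type*} {N : ℕ} (f : Fin N → X → X) (σ : ℕ → Fin N) : ℕ → X → X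
  | 0 => id
  | k + 1 => seqComp f σ k ∘ f (σ k)

/-- `PiMap f σ = ⋂_{k ≥ 1} f_{σ₁} ∘ ⋯ ∘ f_{σ_k}(X)`. -/
def PiMap {X : Type*} {N : ℕ} (f : Fin N → X → X) (σ : ℕ → Fin N) : Set X :=
  ⋂ k : ℕ, seqComp f σ (k + 1) '' Set.univ

/-- The Vietoris topology (on all subsets of `X`; the Vietoris topology on the
nonempty compact subsets `K(X)` is the subspace topology it induces): it is generated
by the sets `{B | B ⊆ U}` and `{B | B ∩ U ≠ ∅}` for `U ⊆ X` open. -/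
def vietoris (X : Type*) [TopologicalSpace X] : TopologicalSpace (Set X) :=
  TopologicalSpace.generateFrom
    ({S | ∃ U : Set X, IsOpen U ∧ S = {B : Set X | B ⊆ U}} ∪
     {S | ∃ U : Set X, IsOpen U ∧ S = {B : Set X | (B ∩ U).Nonempty}})

set_option linter.unusedSectionVars false

namespace AttractorAux

variable {X : Type*} {N : ℕ}

theorem seqComp_congr (f : Fin N → X → X) {σ τ : ℕ → Fin N} :
    ∀ k, (∀ j, j < k → σ j = τ j) → seqComp f σ k = seqComp f τ k
  | 0, _ => rfl
  | k + 1, h => by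
    have h1 : seqComp f σ k = seqComp f τ k :=
      seqComp_congr f k fun j hj => h j (Nat.lt_succ_of_lt hj)
    have h2 : σ k = τ k := h k (Nat.lt_succ_self k)
    show seqComp f σ k ∘ f (σ k) = seqComp f τ k ∘ f (τ k)
    rw [h1, h2]

theorem continuous_seqComp [TopologicalSpace X] (f : Fin N → X → X)
    (hf : ∀ i, Continuous (f i)) (σ : ℕ → Fin N) : ∀ k, Continuous (seqComp f σ k)
  | 0 => continuous_id
  | k + 1 => (continuous_seqComp f hf σ k).comp (hf (σ k))

theorem seqComp_image_antitone (f : Fin N → X → X) (σ : ℕ → Fin N) :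
    Antitone fun k => seqComp f σ k '' univ := by
  apply antitone_nat_of_succ_le
  intro k
  show seqComp f σ (k + 1) '' univ ⊆ seqComp f σ k '' univ
  have h : seqComp f σ (k + 1) = seqComp f σ k ∘ f (σ k) := rfl
  rw [h, image_comp]
  exact image_mono (subset_univ _)

/-- `cons i σ` prepends `i` to the sequence `σ`. -/
def cons (i : Fin N) (σ : ℕ → Fin N) : ℕ → Fin N := fun n => Nat.casesOn n i σ

theorem seqComp_cons (f : Fin N → X → X) (i : Fin N) (σ : ℕ → Fin N) :
    ∀ k, seqComp f (cons i σ) (k + 1) = f i ∘ seqComp f σ k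
  | 0 => rfl
  | k + 1 => by
    show seqComp f (cons i σ) (k + 1) ∘ f (cons i σ (k + 1)) = f i ∘ seqComp f σ (k+1)
    rw [seqComp_cons f i σ k]
    rfl

section PF

variable [TopologicalSpace X] [CompactSpace X] [T2Space X] {f : Fin N → X → X}
  (hf : ∀ i, Continuous (f i)) {π : (ℕ → Fin N) → X}
  (hπ : ∀ σ, PiMap f σ = {π σ})

include hπ

theorem pi_mem (σ : ℕ → Fin N) : ∀ k, π σ ∈ seqComp f σ k '' univ
  | 0 => ⟨π σ, mem_univ _, rfl⟩
  | k + 1 => by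
    have : π σ ∈ PiMap f σ := by rw [hπ σ]; exact rfl
    exact mem_iInter.1 this k

include hf

/-- Step 2: if `π σ ∈ W` with `W` open, then some `seqComp` image of `univ` sits in `W`. -/
theorem exists_seqComp_subset {σ : ℕ → Fin N} {W : Set X} (hW : IsOpen W)
    (hmem : π σ ∈ W) : ∃ k, seqComp f σ k '' univ ⊆ W := by
  have hdir : Directed (· ⊇ ·) fun k : ℕ => seqComp f σ (k + 1) '' univ :=
    ((seqComp_image_antitone f σ).comp_monotone (fun a b h => Nat.succ_le_succ h)).directed_ge
  have hcl : ∀ k : ℕ, IsClosed (seqComp f σ (k + 1) '' univ) := fun k =>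
    (isCompact_univ.image (continuous_seqComp f hf σ (k + 1))).isClosed
  obtain ⟨k, hk⟩ := exists_subset_nhds_of_compactSpace hdir hcl
    (fun x hx => by
      have : x ∈ PiMap f σ := hx
      rw [hπ σ] at this
      rw [this]
      exact hW.mem_nhds hmem)
  exact ⟨k + 1, hk⟩

theorem pi_cons (i : Fin N) (σ : ℕ → Fin N) : π (cons i σ) = f i (π σ) := by
  have hmem : f i (π σ) ∈ PiMap f (cons i σ) := by
    refine mem_iInter.2 fun k => ?_
    rw [seqComp_cons f i σ k, image_comp]
    exact mem_image_of_mem (f i) (pi_mem hπ σ k)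
  rw [hπ (cons i σ)] at hmem
  exact hmem.symm

theorem continuous_pi : Continuous π := by
  rw [continuous_iff_continuousAt]
  intro σ
  intro W hW
  obtain ⟨V, hVW, hVo, hVmem⟩ := mem_nhds_iff.1 hW
  obtain ⟨k, hk⟩ := exists_seqComp_subset hf hπ hVo hVmem
  have hC : {τ : ℕ → Fin N | ∀ j, j < k → τ j = σ j} ∈ 𝓝 σ := by
    have : {τ : ℕ → Fin N | ∀ j, j < k → τ j = σ j}
        = ⋂ j ∈ Finset.range k, (fun τ : ℕ → Fin N => τ j) ⁻¹' {σ j} := by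
      ext τ; simp [Finset.mem_range]
    rw [this]
    exact (isOpen_biInter_finset fun j _ =>
      (continuous_apply j).isOpen_preimage _ (isOpen_discrete _)).mem_nhds (by simp)
  refine Filter.mem_map.2 (Filter.mem_of_superset hC fun τ hτ => ?_)
  have h1 : π τ ∈ seqComp f τ k '' univ := pi_mem hπ τ k
  rw [seqComp_congr f k fun j hj => hτ j hj] at h1
  exact hVW (hk h1)

/-- Step 3 (uniform): if `range π ⊆ W` open then some level `K` works for all `σ`. -/
theorem exists_uniform_level [Nonempty (Fin N)] {W : Set X} (hW : IsOpen W)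
    (hA : range π ⊆ W) : ∃ K, ∀ σ : ℕ → Fin N, seqComp f σ K '' univ ⊆ W := by
  choose k hk using fun σ : ℕ → Fin N =>
    exists_seqComp_subset hf hπ hW (hA (mem_range_self σ))
  have hcover : (univ : Set (ℕ → Fin N)) ⊆
      ⋃ σ : ℕ → Fin N, {τ | ∀ j, j < k σ → τ j = σ j} :=
    fun σ _ => mem_iUnion.2 ⟨σ, fun _ _ => rfl⟩
  have hopen : ∀ σ : ℕ → Fin N, IsOpen {τ : ℕ → Fin N | ∀ j, j < k σ → τ j = σ j} := by
    intro σ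
    have : {τ : ℕ → Fin N | ∀ j, j < k σ → τ j = σ j}
        = ⋂ j ∈ Finset.range (k σ), (fun τ : ℕ → Fin N => τ j) ⁻¹' {σ j} := by
      ext τ; simp [Finset.mem_range]
    rw [this]
    exact isOpen_biInter_finset fun j _ =>
      (continuous_apply j).isOpen_preimage _ (isOpen_discrete _)
  obtain ⟨t, ht⟩ := isCompact_univ.elim_finite_subcover _ hopen hcover
  refine ⟨t.sup k, fun τ => ?_⟩
  obtain ⟨σ, hσt, hτσ⟩ := by
    have := ht (mem_univ τ); simpa using this
  calc seqComp f τ (t.sup k) '' univ ⊆ seqComp f τ (k σ) '' univ :=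
        seqComp_image_antitone f τ (Finset.le_sup hσt)
    _ = seqComp f σ (k σ) '' univ := by
        rw [seqComp_congr f (k σ) fun j hj => hτσ j hj]
    _ ⊆ W := hk σ

end PF

theorem iterate_eq [Nonempty (Fin N)] (f : Fin N → X → X) (B : Set X) :
    ∀ k, (fun C : Set X => ⋃ i, f i '' C)^[k] B = ⋃ σ : ℕ → Fin N, seqComp f σ k '' B
  | 0 => by
    haveI : Nonempty (ℕ → Fin N) := ⟨fun _ => Classical.arbitrary _⟩
    simp only [Function.iterate_zero, id_eq]
    show B = ⋃ σ : ℕ → Fin N, seqComp f σ 0 '' B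
    simp only [seqComp, image_id]
    exact (iUnion_const B).symm
  | k + 1 => by
    rw [Function.iterate_succ_apply, iterate_eq f _ k]
    apply subset_antisymm
    · refine iUnion_subset fun σ => ?_
      rw [image_iUnion]
      refine iUnion_subset fun i => ?_
      refine subset_iUnion_of_subset (fun n => if h : n < k then σ n else i) ?_
      rw [← image_comp]
      have h1 : seqComp f (fun n => if h : n < k then σ n else i) (k + 1)
          = seqComp f (fun n => if h : n < k then σ n else i) k
            ∘ f (if h : k < k then σ k else i) := rfl
      rw [h1]
      have h2 : seqComp f (fun n => if h : n < k then σ n else i) k = seqComp f σ k :=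
        seqComp_congr f k fun j hj => by simp [hj]
      rw [h2]
      simp
    · refine iUnion_subset fun σ => ?_
      refine subset_iUnion_of_subset σ ?_
      have h1 : seqComp f σ (k + 1) = seqComp f σ k ∘ f (σ k) := rfl
      rw [h1, image_comp]
      exact image_mono (subset_iUnion (fun i => f i '' B) (σ k))

end AttractorAux

/-- A point-fibred IFS on a compact Hausdorff space possesses a unique
attractor `A ∈ K(X)`: a nonempty compact set with `F(A) = A` for which there is an open
`U ⊇ A` such that `F^k(B) → A` in the Vietoris topology for every nonempty compact
`B ⊆ U`; and no other element of `K(X)` has these properties. -/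
theorem existsUnique_attractor
    {X : Type*} [TopologicalSpace X] [CompactSpace X] [T2Space X] [Nonempty X]
    {N : ℕ} (hN : 0 < N) (f : Fin N → X → X) (hf : ∀ i, Continuous (f i))
    (hpf : ∀ σ : ℕ → Fin N, ∃ x : X, PiMap f σ = {x}) :
    ∃! A : Set X, (A.Nonempty ∧ IsCompact A) ∧ (⋃ i, f i '' A) = A ∧
      ∃ U : Set X, IsOpen U ∧ A ⊆ U ∧
        ∀ B : Set X, B.Nonempty → IsCompact B → B ⊆ U →
          Filter.Tendsto (fun k => (fun C : Set X => ⋃ i, f i '' C)^[k] B)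
            Filter.atTop (@nhds (Set X) (vietoris X) A) := by
  classical
  haveI : Nonempty (Fin N) := ⟨⟨0, hN⟩⟩
  choose π hπ using hpf
  set F : Set X → Set X := fun C => ⋃ i, f i '' C with hFdef
  set A : Set X := range π with hAdef
  have hAne : A.Nonempty := range_nonempty π
  have hAcp : IsCompact A := isCompact_range (AttractorAux.continuous_pi hf hπ)
  have hAfix : (⋃ i, f i '' A) = A := by
    apply subset_antisymm
    · refine iUnion_subset fun i => ?_
      rintro _ ⟨_, ⟨σ, rfl⟩, rfl⟩
      exact ⟨AttractorAux.cons i σ, AttractorAux.pi_cons hf hπ i σ⟩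
    · rintro _ ⟨σ, rfl⟩
      have hdecomp : σ = AttractorAux.cons (σ 0) (fun n => σ (n + 1)) := by
        funext n; cases n <;> rfl
      refine mem_iUnion.2 ⟨σ 0, π (fun n => σ (n + 1)), ⟨_, rfl⟩, ?_⟩
      rw [← AttractorAux.pi_cons hf hπ (σ 0) (fun n => σ (n + 1)), ← hdecomp]
  have hconv : ∀ B : Set X, B.Nonempty → IsCompact B →
      Tendsto (fun k => F^[k] B) atTop (@nhds (Set X) (vietoris X) A) := by
    intro B hBne _
    rw [vietoris, TopologicalSpace.tendsto_nhds_generateFrom_iff]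
    rintro s (⟨W, hWo, rfl⟩ | ⟨W, hWo, rfl⟩) hAs
    · obtain ⟨K, hK⟩ := AttractorAux.exists_uniform_level hf hπ hWo hAs
      refine mem_of_superset (Ici_mem_atTop K) fun k (hk : K ≤ k) => ?_
      show F^[k] B ⊆ W
      show (fun C : Set X => ⋃ i, f i '' C)^[k] B ⊆ W
      rw [AttractorAux.iterate_eq f B k]
      refine iUnion_subset fun σ => ?_
      exact (image_mono (subset_univ B)).trans
        ((AttractorAux.seqComp_image_antitone f σ hk).trans (hK σ))
    · obtain ⟨x, hxA, hxW⟩ := hAs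
      obtain ⟨σ, rfl⟩ := hxA
      obtain ⟨k₀, hk₀⟩ := AttractorAux.exists_seqComp_subset hf hπ hWo hxW
      refine mem_of_superset (Ici_mem_atTop k₀) fun k (hk : k₀ ≤ k) => ?_
      show ((F^[k] B) ∩ W).Nonempty
      obtain ⟨b, hb⟩ := hBne
      refine ⟨seqComp f σ k b, ?_, ?_⟩
      · show seqComp f σ k b ∈ (fun C : Set X => ⋃ i, f i '' C)^[k] B
        rw [AttractorAux.iterate_eq f B k]
        exact mem_iUnion.2 ⟨σ, mem_image_of_mem _ hb⟩
      · exact hk₀ (AttractorAux.seqComp_image_antitone f σ hk ⟨b, mem_univ b, rfl⟩)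
  refine ⟨A, ⟨⟨hAne, hAcp⟩, hAfix, univ, isOpen_univ, subset_univ A,
    fun B hB1 hB2 _ => hconv B hB1 hB2⟩, ?_⟩
  rintro A' ⟨⟨hA'ne, hA'cp⟩, hA'fix, U', hU'o, hsub', hconv'⟩
  have hiter : ∀ k : ℕ, F^[k] A' = A' := fun k => Function.iterate_fixed hA'fix k
  have ht : Tendsto (fun _ : ℕ => A') atTop (@nhds (Set X) (vietoris X) A) := by
    have h := hconv A' hA'ne hA'cp
    simpa only [hiter] using h
  rw [vietoris, TopologicalSpace.tendsto_nhds_generateFrom_iff] at ht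
  have hmem : ∀ s, s ∈ ({S | ∃ U : Set X, IsOpen U ∧ S = {B : Set X | B ⊆ U}} ∪
      {S | ∃ U : Set X, IsOpen U ∧ S = {B : Set X | (B ∩ U).Nonempty}}) →
      A ∈ s → A' ∈ s := by
    intro s hs hAs
    obtain ⟨k, hk⟩ := Filter.mem_atTop_sets.1 (ht s hs hAs)
    exact hk k le_rfl
  apply subset_antisymm
  · by_contra hns
    obtain ⟨x, hxA', hxA⟩ := not_subset.1 hns
    obtain ⟨W, V, hWo, hVo, hAW, hxV, hdisj⟩ :=
      normal_separation hAcp.isClosed isClosed_singleton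
        (disjoint_singleton_right.2 hxA)
    have hA'W : A' ⊆ W :=
      hmem {B | B ⊆ W} (Or.inl ⟨W, hWo, rfl⟩) hAW
    exact Set.disjoint_left.1 hdisj (hA'W hxA') (hxV rfl)
  · by_contra hns
    obtain ⟨x, hxA, hxA'⟩ := not_subset.1 hns
    have hA'c : IsOpen A'ᶜ := hA'cp.isClosed.isOpen_compl
    have : (A' ∩ A'ᶜ).Nonempty :=
      hmem {B | (B ∩ A'ᶜ).Nonempty} (Or.inr ⟨A'ᶜ, hA'c, rfl⟩) ⟨x, hxA, hxA'⟩
    obtain ⟨y, hy1, hy2⟩ := this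
    exact hy2 hy1
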